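/- Let f in F_q[x] be a monic polynomial that is not a perfect square, with q odd. Then the absolute value of the sum over square-free monic D of degree 2g+1 of the Jacobi symbol (D/f) is at most 2^{deg(f)-1} · q^{g + 1/2}. -/

import Mathlib

open Polynomial UniqueFactorizationMonoid
open scoped Classical

/-- The quadratic residue symbol `(D/P)` for an irreducible `P` in `F_q[x]`:
`0` if `P ∣ D`, `1` if `D` is a nonzero square mod `P`, `-1` otherwise. -/
noncomputable def quadSym {F : Type*} [Field F] [Fintype F] (D P : F[X]) : ℤ :=
  if P ∣ D then 0 else if ∃ x : F[X], P ∣ (x ^ 2 - D) then 1 else -1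

/-- The Jacobi symbol `(D/f)`, the product of `(D/P)` over the monic irreducible
factors of `f` counted with multiplicity. -/
noncomputable def jacSym {F : Type*} [Field F] [Fintype F] (D f : F[X]) : ℤ :=
  ((normalizedFactors f).map (quadSym D)).prod

section Aux

variable {F : Type*} [Field F] [Fintype F]

lemma quadSym_eq_charFun (P D : F[X]) :
    quadSym D P = quadraticCharFun (AdjoinRoot P) (AdjoinRoot.mk P D) := by
  have h1 : P ∣ D ↔ AdjoinRoot.mk P D = 0 := AdjoinRoot.mk_eq_zero.symm
  have h2 : (∃ x : F[X], P ∣ (x ^ 2 - D)) ↔ IsSquare (AdjoinRoot.mk P D) := by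
    constructor
    · rintro ⟨x, hx⟩
      refine ⟨AdjoinRoot.mk P x, ?_⟩
      rw [← map_mul, ← pow_two]
      exact (AdjoinRoot.mk_eq_mk.mpr hx).symm
    · rintro ⟨r, hr⟩
      obtain ⟨x, rfl⟩ := AdjoinRoot.mk_surjective r
      refine ⟨x, AdjoinRoot.mk_eq_mk.mp ?_⟩
      rw [pow_two, map_mul]
      exact hr.symm
  unfold quadSym quadraticCharFun
  by_cases hd : P ∣ D
  · rw [if_pos hd, if_pos (h1.mp hd)]
  · rw [if_neg hd, if_neg (fun h => hd (h1.mpr h))]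
    by_cases hsq : ∃ x : F[X], P ∣ (x ^ 2 - D)
    · rw [if_pos hsq, if_pos (h2.mp hsq)]
    · rw [if_neg hsq, if_neg (fun h => hsq (h2.mpr h))]

lemma quadSym_mul {P : F[X]} (hP : Prime P) (A B : F[X]) :
    quadSym (A * B) P = quadSym A P * quadSym B P := by
  haveI : Fact (Irreducible P) := ⟨hP.irreducible⟩
  haveI : Fintype (AdjoinRoot P) :=
    Module.fintypeOfFintype (AdjoinRoot.powerBasis hP.ne_zero).basis
  rw [quadSym_eq_charFun, quadSym_eq_charFun, quadSym_eq_charFun, map_mul]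
  have e : (fun a : AdjoinRoot P => Classical.propDecidable (IsSquare a)) =
      (fun a => Fintype.IsSquare.decidablePred a) := Subsingleton.elim _ _
  rw [e]
  exact quadraticCharFun_mul (F := AdjoinRoot P) _ _

lemma abs_quadSym_le (D P : F[X]) : |quadSym D P| ≤ 1 := by
  unfold quadSym
  split_ifs <;> simp

lemma abs_jacSym_le (D f : F[X]) : |jacSym D f| ≤ 1 := by
  unfold jacSym
  induction (normalizedFactors f) using Multiset.induction with
  | empty => simp
  | cons P m ih =>
    rw [Multiset.map_cons, Multiset.prod_cons, abs_mul]
    calc |quadSym D P| * |(Multiset.map (quadSym D) m).prod| ≤ 1 * 1 :=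
          mul_le_mul (abs_quadSym_le D P) ih (abs_nonneg _) zero_le_one
      _ = 1 := one_mul 1

lemma jacSym_mul (A B f : F[X]) : jacSym (A * B) f = jacSym A f * jacSym B f := by
  unfold jacSym
  rw [← Multiset.prod_map_mul]
  congr 1
  apply Multiset.map_congr rfl
  intro P hP
  exact quadSym_mul (prime_of_normalized_factor P hP) A B

lemma monic_of_mem_nf {D P : F[X]} (h : P ∈ normalizedFactors D) : P.Monic := by
  have h0 : P ≠ 0 := (prime_of_normalized_factor P h).ne_zero
  rw [← normalize_normalized_factor P h]
  exact monic_normalize h0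

lemma mem_nf {D P : F[X]} (hD : D ≠ 0) (hP : Prime P) (hPm : P.Monic) (hdvd : P ∣ D) :
    P ∈ normalizedFactors D := by
  obtain ⟨r, hr, hassoc⟩ := exists_mem_normalizedFactors_of_dvd hD hP.irreducible hdvd
  rwa [eq_of_monic_of_associated hPm (monic_of_mem_nf hr) hassoc]

set_option linter.unusedSectionVars false

/-- The Möbius function on `F[X]`. -/
noncomputable def polyMu {F : Type*} [Field F] (A : F[X]) : ℤ :=
  if Squarefree A then (-1) ^ (Multiset.card (normalizedFactors A)) else 0

lemma abs_polyMu_le {F : Type*} [Field F] (A : F[X]) : |polyMu A| ≤ 1 := by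
  unfold polyMu
  split_ifs <;> simp

lemma mu_sum_eq {D : F[X]} (hD : D ≠ 0) (s : Finset F[X])
    (hs : ∀ A, A ∈ s ↔ A.Monic ∧ A ^ 2 ∣ D) :
    ∑ A ∈ s, polyMu A = if Squarefree D then 1 else 0 := by
  set R : Finset F[X] := Finset.filter (fun P => P ^ 2 ∣ D) (normalizedFactors D).toFinset
    with hRdef
  have hRmem : ∀ P, P ∈ R ↔ P ∈ normalizedFactors D ∧ P ^ 2 ∣ D := by
    intro P
    rw [hRdef, Finset.mem_filter, Multiset.mem_toFinset]
  have hRprime : ∀ P ∈ R, Prime P := fun P hP =>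
    prime_of_normalized_factor P ((hRmem P).mp hP).1
  have hRmonic : ∀ P ∈ R, P.Monic := fun P hP => monic_of_mem_nf ((hRmem P).mp hP).1
  have hRnorm : ∀ P ∈ R, normalize P = P := fun P hP =>
    normalize_normalized_factor P ((hRmem P).mp hP).1
  have step1 : ∑ A ∈ Finset.filter Squarefree s, polyMu A = ∑ A ∈ s, polyMu A := by
    refine Finset.sum_filter_of_ne ?_
    intro A _ hne
    by_contra hsf
    exact hne (by simp [polyMu, hsf])
  rw [← step1]
  -- product over a subset of `R` facts
  have hprodfacts : ∀ t : Finset F[X], t ⊆ R →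
      (∏ P ∈ t, P).Monic ∧ normalizedFactors (∏ P ∈ t, P) = t.val := by
    intro t ht
    have hmon : (∏ P ∈ t, P).Monic :=
      monic_prod_of_monic t _ (fun P hP => hRmonic P (ht hP))
    refine ⟨hmon, ?_⟩
    have h1 : ∏ P ∈ t, P = t.val.prod := by
      rw [Finset.prod_eq_multiset_prod]
      rw [Multiset.map_id']
    rw [h1, normalizedFactors_prod_eq _ (fun P hP => (hRprime P (ht hP)).irreducible),
      Multiset.map_congr rfl (fun P hP => hRnorm P (ht hP))]
    exact Multiset.map_id' _
  have key : ∑ A ∈ Finset.filter Squarefree s, polyMu A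
      = ∑ t ∈ R.powerset, (-1 : ℤ) ^ t.card := by
    refine Finset.sum_bij' (i := fun A _ => (normalizedFactors A).toFinset)
      (j := fun t _ => ∏ P ∈ t, P) ?_ ?_ ?_ ?_ ?_
    · -- hi
      intro A hA
      rw [Finset.mem_filter] at hA
      obtain ⟨hAs, _⟩ := hA
      obtain ⟨hAm, hAd⟩ := (hs A).mp hAs
      rw [Finset.mem_powerset]
      intro P hP
      rw [Multiset.mem_toFinset] at hP
      have hPp : Prime P := prime_of_normalized_factor P hP
      have hPA : P ∣ A := dvd_of_mem_normalizedFactors hP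
      have hPD : P ∣ D := hPA.trans ((dvd_pow_self A two_ne_zero).trans hAd)
      have hP2 : P ^ 2 ∣ D := (pow_dvd_pow_of_dvd hPA 2).trans hAd
      exact (hRmem P).mpr ⟨mem_nf hD hPp (monic_of_mem_nf hP) hPD, hP2⟩
    · -- hj
      intro t ht
      rw [Finset.mem_powerset] at ht
      obtain ⟨hmon, hnf⟩ := hprodfacts t ht
      rw [Finset.mem_filter]
      refine ⟨(hs _).mpr ⟨hmon, ?_⟩, ?_⟩
      · rw [← Finset.prod_pow]
        refine Finset.prod_dvd_of_coprime ?_ (fun P hP => ((hRmem P).mp (ht hP)).2)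
        intro P hP Q hQ hne
        have hPQ : ¬ P ∣ Q := by
          intro hdvd
          exact hne (eq_of_monic_of_associated (hRmonic P (ht hP)) (hRmonic Q (ht hQ))
            ((hRprime P (ht hP)).irreducible.associated_of_dvd
              (hRprime Q (ht hQ)).irreducible hdvd))
        exact (((hRprime P (ht hP)).coprime_iff_not_dvd.mpr hPQ).pow : _)
      · refine (squarefree_iff_nodup_normalizedFactors hmon.ne_zero).mpr ?_
        rw [hnf]
        exact t.nodup
    · -- left_inv
      intro A hA
      rw [Finset.mem_filter] at hA
      obtain ⟨hAs, hAsf⟩ := hA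
      obtain ⟨hAm, _⟩ := (hs A).mp hAs
      have hA0 : A ≠ 0 := hAm.ne_zero
      have hnd : (normalizedFactors A).Nodup :=
        (squarefree_iff_nodup_normalizedFactors hA0).mp hAsf
      have hval : (normalizedFactors A).toFinset.val = normalizedFactors A := by
        simp [Multiset.toFinset, Multiset.dedup_eq_self.mpr hnd]
      have hprod : ∏ P ∈ (normalizedFactors A).toFinset, P = (normalizedFactors A).prod := by
        rw [Finset.prod_eq_multiset_prod, hval, Multiset.map_id']
      show (∏ P ∈ (normalizedFactors A).toFinset, P) = A
      rw [hprod]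
      refine eq_of_monic_of_associated ?_ hAm (prod_normalizedFactors hA0)
      rw [← Multiset.map_id (normalizedFactors A)]
      exact monic_multiset_prod_of_monic _ _ (fun P hP => monic_of_mem_nf hP)
    · -- right_inv
      intro t ht
      rw [Finset.mem_powerset] at ht
      obtain ⟨_, hnf⟩ := hprodfacts t ht
      show (normalizedFactors (∏ P ∈ t, P)).toFinset = t
      rw [hnf]
      exact Finset.val_toFinset t
    · -- values
      intro A hA
      rw [Finset.mem_filter] at hA
      obtain ⟨hAs, hAsf⟩ := hA
      obtain ⟨hAm, _⟩ := (hs A).mp hAs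
      have hnd : (normalizedFactors A).Nodup :=
        (squarefree_iff_nodup_normalizedFactors hAm.ne_zero).mp hAsf
      have hval : (normalizedFactors A).toFinset.val = normalizedFactors A := by
        simp [Multiset.toFinset, Multiset.dedup_eq_self.mpr hnd]
      have hcard : (normalizedFactors A).toFinset.card = Multiset.card (normalizedFactors A) := by
        rw [Finset.card_def, hval]
      show polyMu A = (-1 : ℤ) ^ (normalizedFactors A).toFinset.card
      rw [hcard]
      simp [polyMu, hAsf]
  rw [key, Finset.sum_powerset_neg_one_pow_card]
  have hiff : R = ∅ ↔ Squarefree D := by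
    constructor
    · intro hRe
      intro x hx
      by_contra hxu
      have hx0 : x ≠ 0 := by
        rintro rfl
        exact hD (zero_dvd_iff.mp (by simpa using hx))
      obtain ⟨p, hpirr, hpdvd⟩ := WfDvdMonoid.exists_irreducible_factor hxu hx0
      have hpprime : Prime p := UniqueFactorizationMonoid.irreducible_iff_prime.mp hpirr
      have hPp : Prime (normalize p) := (associated_normalize p).prime hpprime
      have hPx : normalize p ∣ x := by
        rw [normalize_dvd_iff]
        exact hpdvd
      have hP2 : normalize p ^ 2 ∣ D := by
        refine dvd_trans ?_ hx
        rw [pow_two]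
        exact mul_dvd_mul hPx hPx
      have hPD : normalize p ∣ D := hPx.trans ((dvd_mul_right x x).trans hx)
      have hmem : normalize p ∈ R := (hRmem _).mpr
        ⟨mem_nf hD hPp (monic_normalize hpirr.ne_zero) hPD, hP2⟩
      rw [hRe] at hmem
      simp at hmem
    · intro hsf
      rw [Finset.eq_empty_iff_forall_notMem]
      intro P hP
      obtain ⟨h1, h2⟩ := (hRmem P).mp hP
      refine (prime_of_normalized_factor P h1).not_unit (hsf P ?_)
      rwa [← pow_two]
  rw [if_congr hiff rfl rfl]

lemma monic_coeff_inj {n : ℕ} {p r : F[X]} (hpm : p.Monic) (hpd : p.natDegree = n)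
    (hrm : r.Monic) (hrd : r.natDegree = n) (h : ∀ i : Fin n, p.coeff i = r.coeff i) :
    p = r := by
  ext i
  rcases lt_trichotomy i n with hi | rfl | hi
  · exact h ⟨i, hi⟩
  · have h1 := hpm.coeff_natDegree
    have h2 := hrm.coeff_natDegree
    rw [hpd] at h1
    rw [hrd] at h2
    rw [h1, h2]
  · rw [coeff_eq_zero_of_natDegree_lt (by omega : p.natDegree < i),
      coeff_eq_zero_of_natDegree_lt (by omega : r.natDegree < i)]

lemma finite_monic_deg (n : ℕ) : {p : F[X] | p.Monic ∧ p.natDegree = n}.Finite := by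
  have : Finite ↥{p : F[X] | p.Monic ∧ p.natDegree = n} := by
    refine Finite.of_injective (fun p => (fun i : Fin n => (p : F[X]).coeff i)) ?_
    rintro ⟨p, hp⟩ ⟨r, hr⟩ h
    exact Subtype.ext (monic_coeff_inj hp.1 hp.2 hr.1 hr.2 (fun i => congrFun h i))
  exact Set.finite_coe_iff.mp this

lemma card_monic_le (n : ℕ) :
    (finite_monic_deg (F := F) n).toFinset.card ≤ Fintype.card F ^ n := by
  have h := Finset.card_le_card_of_injOn (s := (finite_monic_deg (F := F) n).toFinset)
    (f := fun p : F[X] => (fun i : Fin n => p.coeff i))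
    (t := (Finset.univ : Finset (Fin n → F))) (fun a _ => Finset.mem_univ _) ?_
  · rwa [Finset.card_univ, Fintype.card_fun, Fintype.card_fin] at h
  · intro p hp r hr h
    simp only [Finset.mem_coe, Set.Finite.mem_toFinset, Set.mem_setOf_eq] at hp hr
    exact monic_coeff_inj hp.1 hp.2 hr.1 hr.2 (fun i => congrFun h i)

end Aux

/-- Let `q` be odd and `f` monic, not a perfect square. Assuming the Weil bound for
the nontrivial character `(·/f)` (character sums over monic `B` of degree `n` are
bounded by `C(deg f - 1, n) q^{n/2}` for `n < deg f` and vanish for `n ≥ deg f`),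
the sum of `(D/f)` over square-free monic `D` of degree `2g+1` is at most
`2^{deg f - 1} q^{g + 1/2}` in absolute value. -/
theorem jacobi_sum_bound {F : Type*} [Field F] [Fintype F] (q : ℕ)
    (hq : Fintype.card F = q) (hodd : Odd q)
    (f : F[X]) (hf : f.Monic) (hns : ¬IsSquare f) (g : ℕ)
    (hWeil : ∀ n < f.natDegree,
      |∑ᶠ B ∈ {B : F[X] | B.Monic ∧ B.natDegree = n}, (jacSym B f : ℝ)| ≤
        (Nat.choose (f.natDegree - 1) n : ℝ) * Real.sqrt q ^ n)
    (hvanish : ∀ n, f.natDegree ≤ n →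
      ∑ᶠ B ∈ {B : F[X] | B.Monic ∧ B.natDegree = n}, (jacSym B f : ℝ) = 0) :
    |∑ᶠ D ∈ {D : F[X] | D.Monic ∧ D.natDegree = 2 * g + 1 ∧ Squarefree D},
        (jacSym D f : ℝ)| ≤
      2 ^ (f.natDegree - 1) * ((q : ℝ) ^ g * Real.sqrt q) := by
  classical
  set d := f.natDegree with hdd
  set N := 2 * g + 1 with hNN
  have hq2 : (Real.sqrt q) ^ 2 = (q : ℝ) := Real.sq_sqrt (by positivity)
  set sq : ℝ := Real.sqrt q with hsqdef
  have hs0 : (0 : ℝ) ≤ sq := Real.sqrt_nonneg _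
  let M : ℕ → Finset F[X] := fun n => (finite_monic_deg (F := F) n).toFinset
  have hM : ∀ n (A : F[X]), A ∈ M n ↔ A.Monic ∧ A.natDegree = n := by
    intro n A
    simp [M, Set.Finite.mem_toFinset]
  have hfin : ∀ n, (∑ᶠ B ∈ {B : F[X] | B.Monic ∧ B.natDegree = n}, (jacSym B f : ℝ))
      = ∑ B ∈ M n, (jacSym B f : ℝ) := by
    intro n
    rw [← finsum_mem_coe_finset]
    congr 1
    ext A
    simp [hM]
  have Tbound : ∀ n, |∑ B ∈ M n, (jacSym B f : ℝ)| ≤ (Nat.choose (d - 1) n : ℝ) * sq ^ n := by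
    intro n
    rcases lt_or_ge n d with h | h
    · rw [← hfin]
      exact hWeil n h
    · rw [← hfin, hvanish n h, abs_zero]
      positivity
  have hLHS : (∑ᶠ D ∈ {D : F[X] | D.Monic ∧ D.natDegree = N ∧ Squarefree D},
      (jacSym D f : ℝ)) = ∑ D ∈ Finset.filter Squarefree (M N), (jacSym D f : ℝ) := by
    have hset : {D : F[X] | D.Monic ∧ D.natDegree = N ∧ Squarefree D}
        = ↑(Finset.filter Squarefree (M N)) := by
      ext A
      simp only [Set.mem_setOf_eq, Finset.mem_coe, Finset.mem_filter, hM]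
      tauto
    rw [hset, finsum_mem_coe_finset]
  rw [hLHS]
  have hMleG : ∀ A : F[X], A ∈ (Finset.range (g + 1)).biUnion M ↔
      A.Monic ∧ A.natDegree ≤ g := by
    intro A
    simp only [Finset.mem_biUnion, Finset.mem_range, hM]
    constructor
    · rintro ⟨a, ha, h1, h2⟩
      exact ⟨h1, by omega⟩
    · rintro ⟨h1, h2⟩
      exact ⟨A.natDegree, by omega, h1, rfl⟩
  have stepA : ∑ D ∈ Finset.filter Squarefree (M N), (jacSym D f : ℝ)
      = ∑ D ∈ M N, ∑ A ∈ Finset.filter (fun A => A ^ 2 ∣ D) ((Finset.range (g + 1)).biUnion M),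
          (polyMu A : ℝ) * (jacSym D f : ℝ) := by
    rw [Finset.sum_filter]
    refine Finset.sum_congr rfl ?_
    intro D hD
    obtain ⟨hDm, hDd⟩ := (hM N D).mp hD
    have hD0 : D ≠ 0 := hDm.ne_zero
    have hsub : ∀ A, A ∈ Finset.filter (fun A => A ^ 2 ∣ D) ((Finset.range (g + 1)).biUnion M)
        ↔ A.Monic ∧ A ^ 2 ∣ D := by
      intro A
      simp only [Finset.mem_filter, hMleG]
      constructor
      · tauto
      · rintro ⟨h1, h2⟩
        have hle := natDegree_le_of_dvd h2 hD0
        rw [h1.natDegree_pow, hDd] at hle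
        exact ⟨⟨h1, by omega⟩, h2⟩
    have hmu := mu_sum_eq hD0 _ hsub
    rw [← Finset.sum_mul]
    have hcast : (∑ A ∈ Finset.filter (fun A => A ^ 2 ∣ D) ((Finset.range (g + 1)).biUnion M),
        (polyMu A : ℝ)) = ((if Squarefree D then 1 else 0 : ℤ) : ℝ) := by
      rw [← hmu]
      push_cast
      ring
    rw [hcast]
    split_ifs <;> simp
  rw [stepA]
  have stepB : ∑ D ∈ M N, ∑ A ∈ Finset.filter (fun A => A ^ 2 ∣ D)
        ((Finset.range (g + 1)).biUnion M), (polyMu A : ℝ) * (jacSym D f : ℝ)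
      = ∑ A ∈ (Finset.range (g + 1)).biUnion M,
          (polyMu A : ℝ) * ((jacSym A f : ℝ) ^ 2 * ∑ B ∈ M (N - 2 * A.natDegree),
            (jacSym B f : ℝ)) := by
    have h1 : ∀ D ∈ M N, (∑ A ∈ Finset.filter (fun A => A ^ 2 ∣ D)
          ((Finset.range (g + 1)).biUnion M), (polyMu A : ℝ) * (jacSym D f : ℝ))
        = ∑ A ∈ (Finset.range (g + 1)).biUnion M,
            if A ^ 2 ∣ D then (polyMu A : ℝ) * (jacSym D f : ℝ) else 0 :=
      fun D _ => Finset.sum_filter _ _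
    rw [Finset.sum_congr rfl h1, Finset.sum_comm]
    refine Finset.sum_congr rfl ?_
    intro A hA
    obtain ⟨hAm, hAd⟩ := (hMleG A).mp hA
    have hA2m : (A ^ 2).Monic := hAm.pow 2
    have hA20 : A ^ 2 ≠ 0 := hA2m.ne_zero
    have h2 : (∑ D ∈ M N, if A ^ 2 ∣ D then (polyMu A : ℝ) * (jacSym D f : ℝ) else 0)
        = ∑ D ∈ Finset.filter (fun D => A ^ 2 ∣ D) (M N), (polyMu A : ℝ) * (jacSym D f : ℝ) :=
      (Finset.sum_filter _ _).symm
    have h3 : (∑ D ∈ Finset.filter (fun D => A ^ 2 ∣ D) (M N), (jacSym D f : ℝ))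
        = ∑ B ∈ M (N - 2 * A.natDegree), (jacSym (A ^ 2 * B) f : ℝ) := by
      refine (Finset.sum_bij (i := fun B _ => A ^ 2 * B) ?_ ?_ ?_ ?_).symm
      · intro B hB
        obtain ⟨hBm, hBd⟩ := (hM _ B).mp hB
        rw [Finset.mem_filter]
        refine ⟨(hM N _).mpr ⟨hA2m.mul hBm, ?_⟩, dvd_mul_right _ _⟩
        rw [hA2m.natDegree_mul hBm, hAm.natDegree_pow, hBd]
        omega
      · intro B1 h1' B2 h2' heq
        exact mul_left_cancel₀ hA20 heq
      · intro D hD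
        rw [Finset.mem_filter] at hD
        obtain ⟨hDM, hdvd⟩ := hD
        obtain ⟨hDm, hDd⟩ := (hM N D).mp hDM
        obtain ⟨B, rfl⟩ := hdvd
        have hBm : B.Monic := hA2m.of_mul_monic_left hDm
        refine ⟨B, ?_, rfl⟩
        refine (hM _ B).mpr ⟨hBm, ?_⟩
        rw [hA2m.natDegree_mul hBm, hAm.natDegree_pow] at hDd
        omega
      · intro B hB
        rfl
    have h4 : ∀ B : F[X], (jacSym (A ^ 2 * B) f : ℝ)
        = (jacSym A f : ℝ) ^ 2 * (jacSym B f : ℝ) := by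
      intro B
      rw [show A ^ 2 * B = A * (A * B) by ring, jacSym_mul, jacSym_mul]
      push_cast
      ring
    rw [h2, ← Finset.mul_sum, h3, Finset.sum_congr rfl (fun B _ => h4 B), ← Finset.mul_sum]
  rw [stepB]
  have choose_sum : (∑ a ∈ Finset.range (g + 1), Nat.choose (d - 1) (N - 2 * a)) ≤ 2 ^ (d - 1) := by
    have hinj : ∀ x ∈ Finset.range (g + 1), ∀ y ∈ Finset.range (g + 1),
        N - 2 * x = N - 2 * y → x = y := by
      intro x hx y hy h
      rw [Finset.mem_range] at hx hy
      omega
    rw [← Finset.sum_image hinj]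
    calc ∑ j ∈ (Finset.range (g + 1)).image (fun a => N - 2 * a), Nat.choose (d - 1) j
        = ∑ j ∈ Finset.filter (fun j => j ≤ d - 1)
            ((Finset.range (g + 1)).image (fun a => N - 2 * a)), Nat.choose (d - 1) j := by
          refine (Finset.sum_filter_of_ne ?_).symm
          intro j _ hne
          by_contra hgt
          exact hne (Nat.choose_eq_zero_of_lt (by omega))
      _ ≤ ∑ j ∈ Finset.range (d - 1 + 1), Nat.choose (d - 1) j := by
          refine Finset.sum_le_sum_of_subset ?_
          intro j hj
          rw [Finset.mem_filter] at hj
          rw [Finset.mem_range]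
          omega
      _ = 2 ^ (d - 1) := Nat.sum_range_choose (d - 1)
  calc |∑ A ∈ (Finset.range (g + 1)).biUnion M, (polyMu A : ℝ) *
          ((jacSym A f : ℝ) ^ 2 * ∑ B ∈ M (N - 2 * A.natDegree), (jacSym B f : ℝ))|
      ≤ ∑ A ∈ (Finset.range (g + 1)).biUnion M, |(polyMu A : ℝ) *
          ((jacSym A f : ℝ) ^ 2 * ∑ B ∈ M (N - 2 * A.natDegree), (jacSym B f : ℝ))| :=
        Finset.abs_sum_le_sum_abs _ _
    _ ≤ ∑ A ∈ (Finset.range (g + 1)).biUnion M,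
          |∑ B ∈ M (N - 2 * A.natDegree), (jacSym B f : ℝ)| := by
        refine Finset.sum_le_sum ?_
        intro A _
        have h1 : |(polyMu A : ℝ)| ≤ 1 := by
          rw [← Int.cast_abs]
          exact_mod_cast abs_polyMu_le A
        have h2 : (jacSym A f : ℝ) ^ 2 ≤ 1 := by
          have h' : |(jacSym A f : ℝ)| ≤ 1 := by
            rw [← Int.cast_abs]
            exact_mod_cast abs_jacSym_le A f
          calc (jacSym A f : ℝ) ^ 2 = |(jacSym A f : ℝ)| ^ 2 := (sq_abs _).symm
            _ ≤ 1 ^ 2 := pow_le_pow_left₀ (abs_nonneg _) h' 2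
            _ = 1 := one_pow 2
        rw [abs_mul, abs_mul, abs_of_nonneg (sq_nonneg ((jacSym A f : ℝ)))]
        calc |(polyMu A : ℝ)| * ((jacSym A f : ℝ) ^ 2 *
                |∑ B ∈ M (N - 2 * A.natDegree), (jacSym B f : ℝ)|)
            ≤ 1 * (1 * |∑ B ∈ M (N - 2 * A.natDegree), (jacSym B f : ℝ)|) := by
              refine mul_le_mul h1 ?_ (by positivity) zero_le_one
              exact mul_le_mul h2 le_rfl (abs_nonneg _) zero_le_one
          _ = |∑ B ∈ M (N - 2 * A.natDegree), (jacSym B f : ℝ)| := by ring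
    _ = ∑ a ∈ Finset.range (g + 1), ∑ A ∈ M a,
          |∑ B ∈ M (N - 2 * A.natDegree), (jacSym B f : ℝ)| := by
        refine Finset.sum_biUnion ?_
        intro a _ b _ hab
        simp only [Function.onFun]
        rw [Finset.disjoint_left]
        intro A hAa hAb
        exact hab (((hM a A).mp hAa).2 ▸ ((hM b A).mp hAb).2 ▸ rfl)
    _ = ∑ a ∈ Finset.range (g + 1), ((M a).card : ℝ) *
          |∑ B ∈ M (N - 2 * a), (jacSym B f : ℝ)| := by
        refine Finset.sum_congr rfl ?_
        intro a _
        rw [Finset.sum_congr rfl (fun A hA => by rw [((hM a A).mp hA).2]),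
          Finset.sum_const, nsmul_eq_mul]
    _ ≤ ∑ a ∈ Finset.range (g + 1), (q : ℝ) ^ a *
          ((Nat.choose (d - 1) (N - 2 * a) : ℝ) * sq ^ (N - 2 * a)) := by
        refine Finset.sum_le_sum ?_
        intro a _
        refine mul_le_mul ?_ (Tbound _) (abs_nonneg _) (by positivity)
        have hc := card_monic_le (F := F) a
        rw [hq] at hc
        exact_mod_cast hc
    _ = (∑ a ∈ Finset.range (g + 1), (Nat.choose (d - 1) (N - 2 * a) : ℝ)) * sq ^ N := by
        rw [Finset.sum_mul]
        refine Finset.sum_congr rfl ?_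
        intro a ha
        rw [Finset.mem_range] at ha
        have hqa : (q : ℝ) ^ a = sq ^ (2 * a) := by
          rw [pow_mul, hq2]
        have hexp : sq ^ (2 * a) * sq ^ (N - 2 * a) = sq ^ N := by
          rw [← pow_add]
          congr 1
          omega
        calc (q : ℝ) ^ a * ((Nat.choose (d - 1) (N - 2 * a) : ℝ) * sq ^ (N - 2 * a))
            = (Nat.choose (d - 1) (N - 2 * a) : ℝ) * (sq ^ (2 * a) * sq ^ (N - 2 * a)) := by
              rw [hqa]; ring
          _ = (Nat.choose (d - 1) (N - 2 * a) : ℝ) * sq ^ N := by rw [hexp]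
    _ ≤ (2 : ℝ) ^ (d - 1) * sq ^ N := by
        refine mul_le_mul_of_nonneg_right ?_ (by positivity)
        calc (∑ a ∈ Finset.range (g + 1), (Nat.choose (d - 1) (N - 2 * a) : ℝ))
            = ((∑ a ∈ Finset.range (g + 1), Nat.choose (d - 1) (N - 2 * a) : ℕ) : ℝ) := by
              push_cast
              rfl
          _ ≤ (((2 : ℕ) ^ (d - 1) : ℕ) : ℝ) := by exact_mod_cast choose_sum
          _ = (2 : ℝ) ^ (d - 1) := by push_cast; rfl
    _ = 2 ^ (d - 1) * ((q : ℝ) ^ g * sq) := by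
        congr 1
        rw [hNN, pow_succ, pow_mul, hq2]
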